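/- If F: A^Z → A^Z is a left expansive cellular automaton, x ∈ A^Z, and there exists t ≥ 1 such that frac(F^t(x)) = frac(x) (the right halves y ↦ (y[j])_{j≥0} of F^t(x) and x agree), then x is eventually periodic. -/

import Mathlib

lemma aux_period {S : Type*} [Finite S] (Q : ℕ → S)
    (hdet : ∀ a b : ℕ, Q (a+1) = Q (b+1) → Q a = Q b) :
    ∃ q, 1 ≤ q ∧ ∀ n, Q (n + q) = Q n := by
  classical
  set G : S → S := fun s => if hs : ∃ n, Q (n+1) = s then Q hs.choose else s with hG
  have hQG : ∀ n, Q n = G (Q (n+1)) := by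
    intro n
    have hex : ∃ k, Q (k+1) = Q (n+1) := ⟨n, rfl⟩
    simp only [hG, dif_pos hex]
    exact (hdet _ _ hex.choose_spec).symm
  have hiter : ∀ n k, Q n = G^[k] (Q (n + k)) := by
    intro n k
    induction k with
    | zero => simp
    | succ k ih =>
      have e : G (Q (n + (k+1))) = Q (n+k) := (hQG (n+k)).symm
      rw [Function.iterate_succ_apply, e]
      exact ih
  obtain ⟨v, hv'⟩ := Finite.exists_infinite_fiber Q
  have hv : (Q ⁻¹' {v}).Infinite := Set.infinite_coe_iff.mp hv'
  obtain ⟨n₁, hn₁⟩ := hv.nonempty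
  obtain ⟨n₂, hn₂, hlt⟩ := hv.exists_gt n₁
  have hn₁' : Q n₁ = v := hn₁
  have hn₂' : Q n₂ = v := hn₂
  refine ⟨n₂ - n₁, by omega, fun n => ?_⟩
  have hvper : G^[n₂ - n₁] v = v := by
    have := hiter n₁ (n₂ - n₁)
    rw [show n₁ + (n₂ - n₁) = n₂ by omega, hn₁', hn₂'] at this
    exact this.symm
  obtain ⟨M, hM, hMgt⟩ := hv.exists_gt (n + (n₂ - n₁))
  have hM' : Q M = v := hM
  have e1 : Q n = G^[M - n] v := by
    have := hiter n (M - n)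
    rwa [show n + (M - n) = M by omega, hM'] at this
  have e2 : Q (n + (n₂ - n₁)) = G^[M - n - (n₂ - n₁)] v := by
    have := hiter (n + (n₂ - n₁)) (M - n - (n₂ - n₁))
    rwa [show n + (n₂ - n₁) + (M - n - (n₂ - n₁)) = M by omega, hM'] at this
  have e3 : G^[M - n] v = G^[M - n - (n₂ - n₁)] v := by
    conv_lhs => rw [show M - n = (M - n - (n₂ - n₁)) + (n₂ - n₁) by omega]
    rw [Function.iterate_add_apply, hvper]
  rw [e1, e2, e3]


lemma aux_local {A : Type*} {F : (ℤ → A) → ℤ → A} {m n : ℕ}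
    {f : (Fin (m + n + 1) → A) → A}
    (hf : ∀ x i, F x i = f fun k => x (i - (m : ℤ) + (k.val : ℤ))) :
    ∀ (s : ℕ) (x₁ x₂ : ℤ → A) (i : ℤ),
      (∀ j : ℤ, i - (s * m : ℕ) ≤ j → j ≤ i + (s * n : ℕ) → x₁ j = x₂ j) →
      F^[s] x₁ i = F^[s] x₂ i := by
  intro s
  induction s with
  | zero =>
    intro x₁ x₂ i hx
    simpa using hx i (by simp) (by simp)
  | succ s ih =>
    intro x₁ x₂ i hx
    rw [Function.iterate_succ_apply, Function.iterate_succ_apply]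
    apply ih
    intro j hj1 hj2
    rw [hf, hf]
    congr 1
    funext k
    have hk0 : (0:ℤ) ≤ (k.val : ℤ) := Int.natCast_nonneg _
    have hk1 : (k.val : ℤ) ≤ (m:ℤ) + (n:ℤ) := by
      have := k.isLt
      omega
    have hsm : ((s+1) * m : ℕ) = (s * m : ℕ) + m := by ring
    have hsn : ((s+1) * n : ℕ) = (s * n : ℕ) + n := by ring
    rw [hsm, hsn] at hx
    push_cast at hx hj1 hj2
    apply hx
    · linarith
    · linarith



/-- `F` is a cellular automaton: it is given by some `(m,n)` local rule. -/
def IsCA {A : Type*} (F : (ℤ → A) → ℤ → A) : Prop :=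
  ∃ (m n : ℕ) (f : (Fin (m + n + 1) → A) → A),
    ∀ x i, F x i = f fun k => x (i - (m : ℤ) + (k.val : ℤ))

/-- `F` is left expansive with dimensions `(h, d, w)`: the contents of a translated
rectangle (spatial offsets `0,...,w-1`, time iterates `t - b` for `-d ≤ b ≤ h`) in any two
space-time diagrams determine the symbol immediately to the left of the rectangle
(at time iterate `t`). -/
def LeftExpansive {A : Type*} (F : (ℤ → A) → ℤ → A) (h d w : ℕ) : Prop :=
  ∀ (x₁ x₂ : ℤ → A) (i₁ i₂ : ℤ) (t₁ t₂ : ℕ), h ≤ t₁ → h ≤ t₂ →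
    (∀ (a : ℕ) (b : ℤ), a < w → -(d : ℤ) ≤ b → b ≤ (h : ℤ) →
      F^[((t₁ : ℤ) - b).toNat] x₁ (i₁ + (a : ℤ)) = F^[((t₂ : ℤ) - b).toNat] x₂ (i₂ + (a : ℤ))) →
    F^[t₁] x₁ (i₁ - 1) = F^[t₂] x₂ (i₂ - 1)

/-- A one-sided sequence is eventually `p`-periodic for some `p ≥ 1`. -/
def EvPeriodicSeq {B : Type*} (y : ℕ → B) : Prop :=
  ∃ p : ℕ, 1 ≤ p ∧ ∃ c : ℕ, ∀ t, c ≤ t → y (t + p) = y t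

/-- A two-sided configuration is eventually periodic (to the right). -/
def EvPeriodicConfig {A : Type*} (x : ℤ → A) : Prop :=
  ∃ p : ℕ, 1 ≤ p ∧ ∃ c : ℤ, ∀ i : ℤ, c ≤ i → x (i + p) = x i

/-- If `F` is a left expansive CA, `x ∈ A^ℤ`, and there exists `t ≥ 1` such that the
right halves of `F^t(x)` and `x` agree, then `x` is eventually periodic. -/
theorem stmt_10 {A : Type*} [Fintype A] (F : (ℤ → A) → ℤ → A) (hF : IsCA F)
    (hexp : ∃ h d w : ℕ, 1 ≤ w ∧ LeftExpansive F h d w)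
    (x : ℤ → A) (t : ℕ) (ht : 1 ≤ t)
    (hfrac : ∀ j : ℕ, F^[t] x (j : ℤ) = x (j : ℤ)) :
    EvPeriodicConfig x := by
  classical
  obtain ⟨m, n, f, hf⟩ := hF
  obtain ⟨h, d, w, hw, hexp⟩ := hexp
  -- one time-period step inside the cone
  have hcone1 : ∀ (s : ℕ) (j : ℤ), ((s * m : ℕ) : ℤ) ≤ j → F^[s + t] x j = F^[s] x j := by
    intro s j hj
    rw [Function.iterate_add_apply]
    apply aux_local hf
    intro j' h1 h2
    have h0 : 0 ≤ j' := by linarith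
    have := hfrac j'.toNat
    rwa [Int.toNat_of_nonneg h0] at this
  -- many time-period steps inside the cone
  have hcone : ∀ (k s : ℕ) (j : ℤ), (((s + k * t) * m : ℕ) : ℤ) ≤ j →
      F^[s + k * t] x j = F^[s] x j := by
    intro k
    induction k with
    | zero => intro s j _; simp
    | succ k ih =>
      intro s j hj
      have hle : ((s + k * t) * m : ℕ) ≤ ((s + (k + 1) * t) * m : ℕ) :=
        Nat.mul_le_mul (by nlinarith) le_rfl
      have hj' : (((s + k * t) * m : ℕ) : ℤ) ≤ j := le_trans (Nat.cast_le.mpr hle) hj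
      have h1 : F^[(s + k * t) + t] x j = F^[s + k * t] x j := hcone1 _ _ hj'
      rw [show s + (k + 1) * t = (s + k * t) + t by ring, h1]
      exact ih s j hj'
  -- parameters
  obtain ⟨s₀, hs₀⟩ : ∃ z, z = (h + d + 1) * t := ⟨_, rfl⟩
  have hhs₀ : h + d + 1 ≤ s₀ := by
    rw [hs₀]; calc h + d + 1 = (h + d + 1) * 1 := (mul_one _).symm
      _ ≤ (h + d + 1) * t := Nat.mul_le_mul le_rfl ht
  obtain ⟨Smax, hSmax⟩ : ∃ z, z = s₀ + t + d := ⟨_, rfl⟩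
  obtain ⟨J, hJ⟩ : ∃ z, z = Smax * m := ⟨_, rfl⟩
  -- reduction within the cone: any time σ < Smax can be replaced by σ % t + s₀
  have key : ∀ (σ : ℕ) (j : ℤ), σ < Smax → (J : ℤ) ≤ j →
      F^[σ] x j = F^[σ % t + s₀] x j := by
    intro σ j hσ hj
    have hjm : ∀ σ' : ℕ, σ' ≤ Smax → ((σ' * m : ℕ) : ℤ) ≤ j := by
      intro σ' hσ'
      refine le_trans (Nat.cast_le.mpr ?_) hj
      rw [hJ]
      exact Nat.mul_le_mul hσ' le_rfl
    have hρ : σ % t < t := Nat.mod_lt _ ht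
    have e1 : F^[σ] x j = F^[σ % t] x j := by
      conv_lhs => rw [← Nat.mod_add_div' σ t]
      exact hcone (σ / t) (σ % t) j (by rw [Nat.mod_add_div']; exact hjm σ hσ.le)
    have e2 : F^[σ % t + (h + d + 1) * t] x j = F^[σ % t] x j := by
      refine hcone (h + d + 1) (σ % t) j (hjm _ ?_)
      rw [← hs₀, hSmax]
      exact le_trans (Nat.add_le_add_right hρ.le s₀) (by omega)
    rw [hs₀, e2, e1]
  -- the rectangle labels
  set P : ℤ → Fin w → Fin t → A :=
    (fun j a s => F^[s₀ + s.val] x (j + (a.val : ℤ))) with hPdef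
  -- equal labels give equal columns for all times < Smax
  have hcols : ∀ j₁ j₂ : ℤ, (J : ℤ) ≤ j₁ → (J : ℤ) ≤ j₂ → P j₁ = P j₂ →
      ∀ (a σ : ℕ), a < w → σ < Smax → F^[σ] x (j₁ + a) = F^[σ] x (j₂ + a) := by
    intro j₁ j₂ h₁ h₂ hP a σ ha hσ
    have ha₁ : (J : ℤ) ≤ j₁ + a := le_trans h₁ (le_add_of_nonneg_right (Int.natCast_nonneg a))
    have ha₂ : (J : ℤ) ≤ j₂ + a := le_trans h₂ (le_add_of_nonneg_right (Int.natCast_nonneg a))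
    rw [key σ (j₁ + a) hσ ha₁, key σ (j₂ + a) hσ ha₂]
    have := congrFun (congrFun hP ⟨a, ha⟩) ⟨σ % t, Nat.mod_lt _ ht⟩
    simp only [hPdef] at this
    rw [Nat.add_comm (σ % t) s₀]
    exact this
  -- the determination step (left expansiveness)
  have KL : ∀ j₁ j₂ : ℤ, (J : ℤ) ≤ j₁ → (J : ℤ) ≤ j₂ → P j₁ = P j₂ →
      P (j₁ - 1) = P (j₂ - 1) := by
    intro j₁ j₂ h₁ h₂ hP
    funext a s
    have hst : s.val < t := s.isLt
    rcases Nat.eq_zero_or_pos a.val with ha0 | hapos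
    · have hh : h ≤ s₀ + s.val := by omega
      have hrect : ∀ (a' : ℕ) (b : ℤ), a' < w → -(d : ℤ) ≤ b → b ≤ (h : ℤ) →
          F^[(((s₀ + s.val : ℕ) : ℤ) - b).toNat] x (j₁ + (a' : ℤ)) =
          F^[(((s₀ + s.val : ℕ) : ℤ) - b).toNat] x (j₂ + (a' : ℤ)) := by
        intro a' b ha' hb1 hb2
        apply hcols j₁ j₂ h₁ h₂ hP a' _ ha'
        omega
      have := hexp x x j₁ j₂ (s₀ + s.val) (s₀ + s.val) hh hh hrect
      simp only [hPdef]
      have e : ∀ j : ℤ, j - 1 + ((a.val : ℕ) : ℤ) = j - 1 := by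
        intro j; rw [ha0]; simp
      rw [e, e]
      exact this
    · have := congrFun (congrFun hP ⟨a.val - 1, by omega⟩) s
      simp only [hPdef] at this ⊢
      have e : ∀ j : ℤ, j - 1 + (a.val : ℤ) = j + ((a.val - 1 : ℕ) : ℤ) := by
        intro j; omega
      rw [e, e]
      exact this
  -- x agrees with the (0,0) entry of P in the cone
  have hxP : ∀ j : ℤ, (J : ℤ) ≤ j → x j = P j ⟨0, hw⟩ ⟨0, ht⟩ := by
    intro j hj
    have hcond : (((0 + (h + d + 1) * t) * m : ℕ) : ℤ) ≤ j := by
      refine le_trans (Nat.cast_le.mpr ?_) hj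
      rw [hJ]
      refine Nat.mul_le_mul ?_ le_rfl
      rw [← hs₀, hSmax]; omega
    have c := hcone (h + d + 1) 0 j hcond
    have egoal : P j ⟨0, hw⟩ ⟨0, ht⟩ = F^[s₀] x j := by
      simp only [hPdef]
      norm_num
    rw [egoal, hs₀]
    rw [zero_add] at c
    simpa using c.symm
  -- the sequence of labels going right is backward deterministic
  have hdet : ∀ a b : ℕ,
      (fun n' : ℕ => P ((J : ℤ) + n')) (a + 1) = (fun n' : ℕ => P ((J : ℤ) + n')) (b + 1) →
      (fun n' : ℕ => P ((J : ℤ) + n')) a = (fun n' : ℕ => P ((J : ℤ) + n')) b := by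
    intro a b hab
    simp only at hab ⊢
    have h1 : (J : ℤ) ≤ (J : ℤ) + ((a + 1 : ℕ) : ℤ) := by
      have : (0:ℤ) ≤ ((a + 1 : ℕ) : ℤ) := Int.natCast_nonneg _
      omega
    have h2 : (J : ℤ) ≤ (J : ℤ) + ((b + 1 : ℕ) : ℤ) := by
      have : (0:ℤ) ≤ ((b + 1 : ℕ) : ℤ) := Int.natCast_nonneg _
      omega
    have := KL _ _ h1 h2 hab
    rw [show (J : ℤ) + ((a + 1 : ℕ) : ℤ) - 1 = (J : ℤ) + (a : ℤ) by push_cast; ring,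
        show (J : ℤ) + ((b + 1 : ℕ) : ℤ) - 1 = (J : ℤ) + (b : ℤ) by push_cast; ring] at this
    exact this
  obtain ⟨q, hq1, hq⟩ := aux_period (fun n' : ℕ => P ((J : ℤ) + n')) hdet
  refine ⟨q, hq1, (J : ℤ), fun i hi => ?_⟩
  have hiq : (J : ℤ) ≤ i + q :=
    le_trans hi (le_add_of_nonneg_right (Int.natCast_nonneg q))
  rw [hxP i hi, hxP (i + q) hiq]
  obtain ⟨n', hn'⟩ : ∃ n' : ℕ, i = (J : ℤ) + n' := ⟨(i - J).toNat, by omega⟩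
  have hper := hq n'
  rw [hn']
  rw [show (J : ℤ) + (n' : ℤ) + (q : ℤ) = (J : ℤ) + ((n' + q : ℕ) : ℤ) by push_cast; ring]
  rw [hper]
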